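/- Suppose g satisfies hypothesis (G) with h = b/K. For ψ in M = C¹([-h,0],I) let y(ψ) ∈ C¹([0,h],ℝ) be the unique solution with values in cl(B(x₂,b)) of y(t) + ∫_0^t g(y(s),ψ(−s)) ds = x₂. Then the map ψ ↦ y(ψ) from M to C¹([0,h],ℝ) is continuously Fréchet differentiable, and its derivative is given by Dy(ψ)χ(t) = −∫_0^t e^{−∫_s^t ∂₁g(y(σ,ψ),ψ(−σ)) dσ} ∂₂g(y(s,ψ),ψ(−s)) χ(−s) ds for χ ∈ C¹([-h,0],ℝ). -/

import Mathlib

open Set MeasureTheory intervalIntegral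

noncomputable def supN {X : Type*} [NormedAddCommGroup X] (a b : ℝ) (f : ℝ → X) : ℝ :=
  ⨆ t : Set.Icc a b, ‖f t.1‖

def C1on {X : Type*} [NormedAddCommGroup X] [NormedSpace ℝ X] (a b : ℝ) (f : ℝ → X) : Prop :=
  ContinuousOn f (Set.Icc a b) ∧ (∀ t ∈ Set.Icc a b, DifferentiableWithinAt ℝ f (Set.Icc a b) t) ∧
    ContinuousOn (derivWithin f (Set.Icc a b)) (Set.Icc a b)

noncomputable def nC1 {X : Type*} [NormedAddCommGroup X] [NormedSpace ℝ X] (a b : ℝ) (f : ℝ → X) : ℝ :=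
  supN a b f + supN a b (derivWithin f (Set.Icc a b))

/-- Partial derivative in the first argument. -/
noncomputable def p1 (k : ℝ → ℝ → ℝ) (x y : ℝ) : ℝ := deriv (fun x' => k x' y) x

/-- Partial derivative in the second argument. -/
noncomputable def p2 (k : ℝ → ℝ → ℝ) (x y : ℝ) : ℝ := deriv (fun y' => k x y') y

namespace Stmt19Aux

lemma supN_nonneg {X : Type*} [NormedAddCommGroup X] (a b : ℝ) (f : ℝ → X) : 0 ≤ supN a b f :=
  Real.iSup_nonneg fun _ => norm_nonneg _

lemma supN_le {X : Type*} [NormedAddCommGroup X] {a b C : ℝ} {f : ℝ → X} (hC : 0 ≤ C)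
    (h : ∀ t ∈ Icc a b, ‖f t‖ ≤ C) : supN a b f ≤ C :=
  Real.iSup_le (fun t => h t t.2) hC

lemma le_supN {X : Type*} [NormedAddCommGroup X] {a b : ℝ} {f : ℝ → X}
    (hf : ContinuousOn f (Icc a b)) {t : ℝ} (ht : t ∈ Icc a b) : ‖f t‖ ≤ supN a b f := by
  have hb : BddAbove (Set.range fun t : Icc a b => ‖f t.1‖) := by
    have : (Set.range fun t : Icc a b => ‖f t.1‖) = (fun x => ‖f x‖) '' (Icc a b) := by
      ext v; constructor
      · rintro ⟨⟨u, hu⟩, rfl⟩; exact ⟨u, hu, rfl⟩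
      · rintro ⟨u, hu, rfl⟩; exact ⟨⟨u, hu⟩, rfl⟩
    rw [this]
    exact (isCompact_Icc.image_of_continuousOn hf.norm).bddAbove
  exact le_ciSup hb (⟨t, ht⟩ : Icc a b)

lemma abs_le_supN {a b : ℝ} {f : ℝ → ℝ} (hf : ContinuousOn f (Icc a b)) {t : ℝ}
    (ht : t ∈ Icc a b) : |f t| ≤ supN a b f := by
  simpa [Real.norm_eq_abs] using le_supN hf ht

lemma supN_le' {a b C : ℝ} {f : ℝ → ℝ} (hC : 0 ≤ C)
    (h : ∀ t ∈ Icc a b, |f t| ≤ C) : supN a b f ≤ C :=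
  supN_le hC (by simpa [Real.norm_eq_abs] using h)

lemma supN_le_nC1 {X : Type*} [NormedAddCommGroup X] [NormedSpace ℝ X] (a b : ℝ) (f : ℝ → X) :
    supN a b f ≤ nC1 a b f :=
  le_add_of_nonneg_right (supN_nonneg _ _ _)

/-- FTC within an interval `Icc 0 H`. -/
lemma hasDerivWithinAt_primitive {f : ℝ → ℝ} {H : ℝ}
    (hf : ContinuousOn f (Icc 0 H)) {t : ℝ} (ht : t ∈ Icc 0 H) :
    HasDerivWithinAt (fun u => ∫ x in (0:ℝ)..u, f x) (f t) (Icc 0 H) t := by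
  haveI : Fact (t ∈ Icc (0:ℝ) H) := ⟨ht⟩
  have hint : IntervalIntegrable f volume 0 t := by
    apply ContinuousOn.intervalIntegrable
    apply hf.mono
    rw [uIcc_of_le ht.1]
    exact Icc_subset_Icc le_rfl ht.2
  exact intervalIntegral.integral_hasDerivWithinAt_right hint
    (hf.stronglyMeasurableAtFilter_nhdsWithin measurableSet_Icc t)
    (hf.continuousWithinAt ht)

/-- FTC2 within an interval. -/
lemma integral_derivWithin {f f' : ℝ → ℝ} {H t : ℝ} (ht : t ∈ Icc 0 H)
    (hc : ContinuousOn f (Icc 0 H))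
    (hd : ∀ x ∈ Icc 0 H, HasDerivWithinAt f (f' x) (Icc 0 H) x)
    (hc' : ContinuousOn f' (Icc 0 H)) :
    ∫ x in (0:ℝ)..t, f' x = f t - f 0 := by
  have hsub : Icc (0:ℝ) t ⊆ Icc 0 H := Icc_subset_Icc le_rfl ht.2
  apply intervalIntegral.integral_eq_sub_of_hasDeriv_right_of_le ht.1
    (hc.mono hsub)
  · intro x hx
    have hxH : x ∈ Icc (0:ℝ) H := ⟨hx.1.le, hx.2.le.trans ht.2⟩
    have : HasDerivAt f (f' x) x := by
      apply (hd x hxH).hasDerivAt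
      apply Icc_mem_nhds (by exact hx.1) (lt_of_lt_of_le hx.2 ht.2)
    exact this.hasDerivWithinAt
  · apply ContinuousOn.intervalIntegrable
    apply hc'.mono
    rw [uIcc_of_le ht.1]
    exact hsub

/-- 1-D Taylor bound: if the derivative varies by at most `C` from its value at `x` on a
convex set, then `|f y - f x - f' x (y - x)| ≤ C |y - x|`. -/
lemma taylor_bound {f f' : ℝ → ℝ} {s : Set ℝ} (hs : Convex ℝ s)
    (hf : ∀ z ∈ s, HasDerivWithinAt f (f' z) s z) {x y : ℝ} (hx : x ∈ s) (hy : y ∈ s)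
    {C : ℝ} (hC : ∀ z ∈ s, |f' z - f' x| ≤ C) :
    |f y - f x - f' x * (y - x)| ≤ C * |y - x| := by
  have h2 : ∀ z ∈ s, HasDerivWithinAt (fun w => f w - f' x * w) (f' z - f' x) s z := by
    intro z hz
    have := (hf z hz).sub ((hasDerivWithinAt_id z s).const_mul (f' x))
    simp only [id_eq, mul_one] at this
    exact this
  have := hs.norm_image_sub_le_of_norm_hasDerivWithin_le h2
    (fun z hz => hC z hz) hx hy
  rw [Real.norm_eq_abs, Real.norm_eq_abs] at this
  convert this using 2
  ring

lemma exp_lip {x y : ℝ} (hx : |x| ≤ 1) (hy : |y| ≤ 1) :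
    |Real.exp x - Real.exp y| ≤ Real.exp 1 * |x - y| := by
  have hconv : Convex ℝ (Icc (-1:ℝ) 1) := convex_Icc _ _
  have hder : ∀ z ∈ Icc (-1:ℝ) 1, HasDerivWithinAt Real.exp (Real.exp z) (Icc (-1:ℝ) 1) z :=
    fun z _ => (Real.hasDerivAt_exp z).hasDerivWithinAt
  have hb : ∀ z ∈ Icc (-1:ℝ) 1, ‖Real.exp z‖ ≤ Real.exp 1 := by
    intro z hz
    rw [Real.norm_eq_abs, abs_of_pos (Real.exp_pos z)]
    exact Real.exp_le_exp.2 hz.2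
  have := hconv.norm_image_sub_le_of_norm_hasDerivWithin_le hder hb
    (abs_le.1 hy |> fun h => ⟨h.1, h.2⟩) (abs_le.1 hx |> fun h => ⟨h.1, h.2⟩)
  simpa [Real.norm_eq_abs] using this

end Stmt19Aux

namespace Stmt19Aux

noncomputable def Bfun (A : ℝ → ℝ) (t : ℝ) : ℝ := ∫ σ in (0:ℝ)..t, A σ

noncomputable def Vfun (A C X : ℝ → ℝ) (t : ℝ) : ℝ :=
  ∫ s in (0:ℝ)..t, Real.exp (Bfun A s) * (C s * X s)

noncomputable def Dfun (A C X : ℝ → ℝ) : ℝ → ℝ :=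
  fun t => -∫ s in (0:ℝ)..t, Real.exp (-∫ σ in s..t, A σ) * (C s * X s)

variable {H : ℝ} {A C X : ℝ → ℝ}

lemma Bfun_cont (hA : ContinuousOn A (Icc 0 H)) : ContinuousOn (Bfun A) (Icc 0 H) :=
  fun t ht => ((hasDerivWithinAt_primitive hA ht).differentiableWithinAt).continuousWithinAt

lemma Vint_cont (hA : ContinuousOn A (Icc 0 H)) (hC : ContinuousOn C (Icc 0 H))
    (hX : ContinuousOn X (Icc 0 H)) :
    ContinuousOn (fun s => Real.exp (Bfun A s) * (C s * X s)) (Icc 0 H) :=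
  ((Real.continuous_exp.comp_continuousOn (Bfun_cont hA)).mul (hC.mul hX))

lemma Vfun_cont (hA : ContinuousOn A (Icc 0 H)) (hC : ContinuousOn C (Icc 0 H))
    (hX : ContinuousOn X (Icc 0 H)) : ContinuousOn (Vfun A C X) (Icc 0 H) :=
  fun t ht => ((hasDerivWithinAt_primitive (Vint_cont hA hC hX) ht).differentiableWithinAt).continuousWithinAt

lemma intInt (hA : ContinuousOn A (Icc 0 H)) {t : ℝ} (ht : t ∈ Icc 0 H) :
    IntervalIntegrable A volume 0 t := by
  apply ContinuousOn.intervalIntegrable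
  apply hA.mono
  rw [uIcc_of_le ht.1]
  exact Icc_subset_Icc le_rfl ht.2

lemma Dfun_eq (hA : ContinuousOn A (Icc 0 H)) {t : ℝ} (ht : t ∈ Icc 0 H) :
    Dfun A C X t = -(Real.exp (-(Bfun A t)) * Vfun A C X t) := by
  unfold Dfun Vfun
  rw [← intervalIntegral.integral_const_mul]
  congr 1
  apply intervalIntegral.integral_congr
  intro s hs
  have hs' : s ∈ Icc 0 H := by
    rw [uIcc_of_le ht.1] at hs; exact ⟨hs.1, hs.2.trans ht.2⟩
  have h1 : ∫ σ in s..t, A σ = Bfun A t - Bfun A s := by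
    rw [Bfun, Bfun, intervalIntegral.integral_interval_sub_left (intInt hA ht) (intInt hA hs')]
  simp only [h1]
  rw [show -(Bfun A t - Bfun A s) = -(Bfun A t) + Bfun A s by ring, Real.exp_add]
  ring

lemma Dfun_cont (hA : ContinuousOn A (Icc 0 H)) (hC : ContinuousOn C (Icc 0 H))
    (hX : ContinuousOn X (Icc 0 H)) : ContinuousOn (Dfun A C X) (Icc 0 H) := by
  apply ContinuousOn.congr
    (((Real.continuous_exp.comp_continuousOn (Bfun_cont hA).neg).mul (Vfun_cont hA hC hX)).neg)
  intro t ht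
  exact Dfun_eq hA ht

lemma Dfun_hasDeriv (hA : ContinuousOn A (Icc 0 H)) (hC : ContinuousOn C (Icc 0 H))
    (hX : ContinuousOn X (Icc 0 H)) {t : ℝ} (ht : t ∈ Icc 0 H) :
    HasDerivWithinAt (Dfun A C X) (-(A t * Dfun A C X t + C t * X t)) (Icc 0 H) t := by
  have hB := hasDerivWithinAt_primitive hA ht
  have hV := hasDerivWithinAt_primitive (Vint_cont hA hC hX) ht
  have hE : HasDerivWithinAt (fun u => Real.exp (-(Bfun A u)))
      (Real.exp (-(Bfun A t)) * (-(A t))) (Icc 0 H) t := (hB.neg).exp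
  have hW : HasDerivWithinAt (fun u => -(Real.exp (-(Bfun A u)) * Vfun A C X u))
      (-(Real.exp (-(Bfun A t)) * (-(A t)) * Vfun A C X t +
         Real.exp (-(Bfun A t)) * (Real.exp (Bfun A t) * (C t * X t)))) (Icc 0 H) t :=
    (hE.mul hV).neg
  have heq : HasDerivWithinAt (Dfun A C X)
      (-(Real.exp (-(Bfun A t)) * (-(A t)) * Vfun A C X t +
         Real.exp (-(Bfun A t)) * (Real.exp (Bfun A t) * (C t * X t)))) (Icc 0 H) t :=
    hW.congr (fun u hu => Dfun_eq hA hu) (Dfun_eq hA ht)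
  convert heq using 1
  rw [Dfun_eq hA ht, Real.exp_neg]
  field_simp

lemma Bfun_bound {la : ℝ} (hA : ContinuousOn A (Icc 0 H)) (hla : ∀ s ∈ Icc 0 H, |A s| ≤ la)
    {t : ℝ} (ht : t ∈ Icc 0 H) : |Bfun A t| ≤ la * t := by
  have := intervalIntegral.norm_integral_le_of_norm_le_const (C := la)
    (f := A) (a := 0) (b := t) ?_
  · rw [Real.norm_eq_abs] at this
    calc |Bfun A t| ≤ la * |t - 0| := this
    _ = la * t := by rw [sub_zero, abs_of_nonneg ht.1]
  · intro x hx
    rw [uIoc_of_le ht.1] at hx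
    exact hla x ⟨hx.1.le, hx.2.trans ht.2⟩

end Stmt19Aux


/-- The candidate derivative of ψ ↦ y(·,ψ):
Dy(ψ)χ(t) = -∫₀ᵗ e^{-∫ₛᵗ ∂₁g(y(σ,ψ),ψ(-σ)) dσ} ∂₂g(y(s,ψ),ψ(-s)) χ(-s) ds. -/
noncomputable def DY (g : ℝ → ℝ → ℝ) (Y : (ℝ → ℝ) → ℝ → ℝ) (ψ χ : ℝ → ℝ) : ℝ → ℝ :=
  fun t => -∫ s in (0:ℝ)..t,
    Real.exp (-∫ σ in s..t, p1 g (Y ψ σ) (ψ (-σ))) * (p2 g (Y ψ s) (ψ (-s)) * χ (-s))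

namespace Stmt19Aux

set_option maxHeartbeats 4000000 in
lemma main
    (I J : Set ℝ) (hIo : IsOpen I) (hJo : IsOpen J)
    (x₂ b K : ℝ) (hb : 0 < b) (hK : 0 < K)
    (g : ℝ → ℝ → ℝ)
    (hsub : Metric.closedBall x₂ b ⊆ J)
    (hg : ContDiffOn ℝ 1 (fun p : ℝ × ℝ => g p.1 p.2) (J ×ˢ I))
    (hg2 : ∀ x ∈ Metric.closedBall x₂ b, ∀ y ∈ I, |p1 g x y| < K / b)
    (Y : (ℝ → ℝ) → ℝ → ℝ)
    (hY : ∀ ψ : ℝ → ℝ, C1on (-(b/K)) 0 ψ → (∀ t ∈ Set.Icc (-(b/K)) 0, ψ t ∈ I) →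
      C1on 0 (b/K) (Y ψ) ∧ (∀ s ∈ Set.Icc (0:ℝ) (b/K), Y ψ s ∈ Metric.closedBall x₂ b) ∧
      (∀ t ∈ Set.Icc (0:ℝ) (b/K),
        Y ψ t + ∫ s in (0:ℝ)..t, g (Y ψ s) (ψ (-s)) = x₂))
    (ψ : ℝ → ℝ) (hψ1 : C1on (-(b/K)) 0 ψ) (hψ2 : ∀ t ∈ Set.Icc (-(b/K)) 0, ψ t ∈ I)
    (ε' : ℝ) (hε' : 0 < ε') :
    ∃ δ > 0, ∀ ψ' : ℝ → ℝ, C1on (-(b/K)) 0 ψ' → (∀ t ∈ Set.Icc (-(b/K)) 0, ψ' t ∈ I) →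
      nC1 (-(b/K)) 0 (ψ' - ψ) ≤ δ →
      (nC1 0 (b/K) (Y ψ' - Y ψ - DY g Y ψ (ψ' - ψ)) ≤ ε' * nC1 (-(b/K)) 0 (ψ' - ψ)) ∧
      (∀ χ : ℝ → ℝ, C1on (-(b/K)) 0 χ →
        nC1 0 (b/K) (DY g Y ψ' χ - DY g Y ψ χ) ≤ ε' * nC1 (-(b/K)) 0 χ) := by
  set h := b / K with hhdef
  have hh0 : 0 < h := div_pos hb hK
  have hmem : ∀ s ∈ Icc (0:ℝ) h, -s ∈ Icc (-h) 0 :=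
    fun s hs => ⟨neg_le_neg hs.2, neg_nonpos.2 hs.1⟩
  obtain ⟨hYc, hYb, hYe⟩ := hY ψ hψ1 hψ2
  have hψn : ContinuousOn (fun s => ψ (-s)) (Icc 0 h) :=
    hψ1.1.comp continuous_neg.continuousOn hmem
  -- the compact convex neighborhood Kc of the range of ψ inside I
  set ran := ψ '' Icc (-h) 0 with hrandef
  have hranc : IsCompact ran := isCompact_Icc.image_of_continuousOn hψ1.1
  have hransub : ran ⊆ I := by rintro _ ⟨u, hu, rfl⟩; exact hψ2 u hu
  have hranconv : Convex ℝ ran :=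
    convex_iff_ordConnected.mpr ((isPreconnected_Icc.image _ hψ1.1).ordConnected)
  obtain ⟨δ₀, hδ₀, hKcI⟩ := hranc.exists_cthickening_subset_open hIo hransub
  set Kc := Metric.cthickening δ₀ ran with hKcdef
  have hKcc : IsCompact Kc := hranc.cthickening
  have hKcconv : Convex ℝ Kc := hranconv.cthickening δ₀
  have hranKc : ran ⊆ Kc := Metric.self_subset_cthickening _
  have hmemKc : ∀ u v, v ∈ Icc (-h) 0 → |u - ψ v| ≤ δ₀ → u ∈ Kc := by
    intro u v hv hd
    apply Metric.closedBall_subset_cthickening (x := ψ v) (Set.mem_image_of_mem ψ hv) δ₀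
    rw [Metric.mem_closedBall, Real.dist_eq]; exact hd
  set S := (Metric.closedBall x₂ b) ×ˢ Kc with hSdef
  have hBne : (Metric.closedBall x₂ b).Nonempty := ⟨x₂, Metric.mem_closedBall_self hb.le⟩
  have hSne : S.Nonempty :=
    hBne.prod ⟨ψ 0, hranKc (Set.mem_image_of_mem ψ ⟨neg_nonpos.2 hh0.le, le_rfl⟩)⟩
  have hScomp : IsCompact S := (isCompact_closedBall _ _).prod hKcc
  have hSsub : S ⊆ J ×ˢ I := Set.prod_mono hsub hKcI
  have hSconv : Convex ℝ S := (convex_closedBall _ _).prod hKcconv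
  -- partial derivatives: pointwise characterization and continuity
  have hGdiff : ∀ p ∈ J ×ˢ I, DifferentiableAt ℝ (fun q : ℝ × ℝ => g q.1 q.2) p :=
    fun p hp => (hg.contDiffAt ((hJo.prod hIo).mem_nhds hp)).differentiableAt one_ne_zero
  have hp1f : ∀ p ∈ J ×ˢ I, HasDerivAt (fun x' => g x' p.2)
      (fderiv ℝ (fun q : ℝ × ℝ => g q.1 q.2) p ((1:ℝ), (0:ℝ))) p.1 := by
    intro p hp
    have h2 : HasDerivAt (fun x' : ℝ => (x', p.2)) ((1:ℝ), (0:ℝ)) p.1 :=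
      HasDerivAt.prodMk (hasDerivAt_id p.1) (hasDerivAt_const p.1 p.2)
    exact (hGdiff p hp).hasFDerivAt.comp_hasDerivAt p.1 h2
  have hp2f : ∀ p ∈ J ×ˢ I, HasDerivAt (fun y' => g p.1 y')
      (fderiv ℝ (fun q : ℝ × ℝ => g q.1 q.2) p ((0:ℝ), (1:ℝ))) p.2 := by
    intro p hp
    have h2 : HasDerivAt (fun y' : ℝ => (p.1, y')) ((0:ℝ), (1:ℝ)) p.2 :=
      HasDerivAt.prodMk (hasDerivAt_const p.2 p.1) (hasDerivAt_id p.2)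
    exact (hGdiff p hp).hasFDerivAt.comp_hasDerivAt p.2 h2
  have hp1eqf : ∀ p ∈ J ×ˢ I,
      p1 g p.1 p.2 = fderiv ℝ (fun q : ℝ × ℝ => g q.1 q.2) p ((1:ℝ), (0:ℝ)) :=
    fun p hp => (hp1f p hp).deriv
  have hp2eqf : ∀ p ∈ J ×ˢ I,
      p2 g p.1 p.2 = fderiv ℝ (fun q : ℝ × ℝ => g q.1 q.2) p ((0:ℝ), (1:ℝ)) :=
    fun p hp => (hp2f p hp).deriv
  have hDx : ∀ p ∈ J ×ˢ I, HasDerivAt (fun x' => g x' p.2) (p1 g p.1 p.2) p.1 := by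
    intro p hp; rw [hp1eqf p hp]; exact hp1f p hp
  have hDy : ∀ p ∈ J ×ˢ I, HasDerivAt (fun y' => g p.1 y') (p2 g p.1 p.2) p.2 := by
    intro p hp; rw [hp2eqf p hp]; exact hp2f p hp
  have hfdc : ContinuousOn (fderiv ℝ (fun q : ℝ × ℝ => g q.1 q.2)) (J ×ˢ I) :=
    hg.continuousOn_fderiv_of_isOpen (hJo.prod hIo) le_rfl
  have hp1c : ContinuousOn (fun p : ℝ × ℝ => p1 g p.1 p.2) (J ×ˢ I) :=
    (hfdc.clm_apply continuousOn_const).congr hp1eqf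
  have hp2c : ContinuousOn (fun p : ℝ × ℝ => p2 g p.1 p.2) (J ×ˢ I) :=
    (hfdc.clm_apply continuousOn_const).congr hp2eqf
  -- the constants lam (with lam * h < 1) and Lc
  obtain ⟨pm, hpmS, hpm⟩ := hScomp.exists_isMaxOn hSne (hp1c.mono hSsub).abs
  set lam := |p1 g pm.1 pm.2| with hlamdef
  have hlam : ∀ p ∈ S, |p1 g p.1 p.2| ≤ lam := fun p hp => hpm hp
  have hlam0 : 0 ≤ lam := abs_nonneg _
  have hlamlt : lam < K / b := hg2 pm.1 hpmS.1 pm.2 (hKcI hpmS.2)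
  set κ := lam * h with hκdef
  have hκ0 : 0 ≤ κ := mul_nonneg hlam0 hh0.le
  have hκ1 : κ < 1 := by
    have h1 : lam * h < (K / b) * h := mul_lt_mul_of_pos_right hlamlt hh0
    have h2 : (K / b) * h = 1 := by rw [hhdef]; field_simp
    rw [hκdef]; linarith
  obtain ⟨qm, hqmS, hqm⟩ := hScomp.exists_isMaxOn hSne (hp2c.mono hSsub).abs
  set Lc := |p2 g qm.1 qm.2| with hLcdef
  have hLc : ∀ p ∈ S, |p2 g p.1 p.2| ≤ Lc := fun p hp => hqm hp
  have hLc0 : 0 ≤ Lc := abs_nonneg _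
  -- uniform continuity of the partial derivatives on S
  have hUC : ∀ η > 0, ∃ d > 0, ∀ p ∈ S, ∀ q ∈ S, dist p q ≤ d →
      |p1 g p.1 p.2 - p1 g q.1 q.2| ≤ η ∧ |p2 g p.1 p.2 - p2 g q.1 q.2| ≤ η := by
    intro η hη
    have u1 := hScomp.uniformContinuousOn_of_continuous (hp1c.mono hSsub)
    have u2 := hScomp.uniformContinuousOn_of_continuous (hp2c.mono hSsub)
    rw [Metric.uniformContinuousOn_iff_le] at u1 u2
    obtain ⟨d1, hd1, h1⟩ := u1 η hη
    obtain ⟨d2, hd2, h2⟩ := u2 η hη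
    refine ⟨min d1 d2, lt_min hd1 hd2, fun p hp q hq hd => ⟨?_, ?_⟩⟩
    · have := h1 p hp q hq (hd.trans (min_le_left _ _))
      rwa [Real.dist_eq] at this
    · have := h2 p hp q hq (hd.trans (min_le_right _ _))
      rwa [Real.dist_eq] at this
  -- constants
  set E1 := Real.exp 1 with hE1def
  have hE10 : 0 < E1 := Real.exp_pos 1
  have hE11 : 1 ≤ E1 := Real.one_le_exp zero_le_one
  have h1κ : 0 < 1 - κ := by linarith
  set Cy0 := h * Lc / (1 - κ) with hCy0def
  have hCy00 : 0 ≤ Cy0 := div_nonneg (mul_nonneg hh0.le hLc0) h1κ.le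
  set C₁ := ((1 + lam) * h / (1 - κ) + 1) * (2 * Cy0 + 1) with hC₁def
  have hC₁0 : 0 ≤ C₁ := by positivity
  set C₂ := E1 ^ 2 * h * (2 * h * Lc + 1) with hC₂def
  have hC₂0 : 0 ≤ C₂ := by positivity
  set C₃ := lam * C₂ + E1 ^ 2 * h * Lc + 1 with hC₃def
  have hC₃0 : 0 ≤ C₃ := by positivity
  set Ctot := C₁ + C₂ + C₃ + 1 with hCtotdef
  have hCtot0 : 0 < Ctot := by positivity
  set η := ε' / Ctot with hηdef
  have hη0 : 0 < η := div_pos hε' hCtot0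
  obtain ⟨d, hd0, hUCd⟩ := hUC η hη0
  refine ⟨min δ₀ (d / (Cy0 + 1)), lt_min hδ₀ (by positivity), fun ψ' hψ'1 hψ'2 hle => ?_⟩
  obtain ⟨hYc', hYb', hYe'⟩ := hY ψ' hψ'1 hψ'2
  have hψ'n : ContinuousOn (fun s => ψ' (-s)) (Icc 0 h) :=
    hψ'1.1.comp continuous_neg.continuousOn hmem
  have hΔc : ContinuousOn (ψ' - ψ) (Icc (-h) 0) := hψ'1.1.sub hψ1.1
  set dA := supN (-h) 0 (ψ' - ψ) with hdAdef
  have hdA0 : 0 ≤ dA := supN_nonneg _ _ _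
  have hdAδ : dA ≤ min δ₀ (d / (Cy0 + 1)) := le_trans (supN_le_nC1 _ _ _) hle
  have hdAδ₀ : dA ≤ δ₀ := hdAδ.trans (min_le_left _ _)
  have hdAd : (Cy0 + 1) * dA ≤ d := by
    have h1 : dA ≤ d / (Cy0 + 1) := hdAδ.trans (min_le_right _ _)
    rw [le_div_iff₀ (by positivity)] at h1
    linarith [mul_comm dA (Cy0 + 1)]
  have hdAd' : dA ≤ d := by nlinarith
  have hΔpt : ∀ v ∈ Icc (-h) 0, |ψ' v - ψ v| ≤ dA := by
    intro v hv
    have := abs_le_supN hΔc hv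
    simpa using this
  have hu'Kc : ∀ s ∈ Icc (0:ℝ) h, ψ' (-s) ∈ Kc := by
    intro s hs
    exact hmemKc _ (-s) (hmem s hs) ((hΔpt (-s) (hmem s hs)).trans hdAδ₀)
  have huKc : ∀ s ∈ Icc (0:ℝ) h, ψ (-s) ∈ Kc := fun s hs =>
    hranKc (Set.mem_image_of_mem ψ (hmem s hs))
  have hpS : ∀ s ∈ Icc (0:ℝ) h, (Y ψ s, ψ (-s)) ∈ S := fun s hs =>
    Set.mk_mem_prod (hYb s hs) (huKc s hs)
  have hpS' : ∀ s ∈ Icc (0:ℝ) h, (Y ψ' s, ψ' (-s)) ∈ S := fun s hs =>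
    Set.mk_mem_prod (hYb' s hs) (hu'Kc s hs)
  -- integrand continuity
  have hgc : ContinuousOn (fun p : ℝ × ℝ => g p.1 p.2) (J ×ˢ I) := hg.continuousOn
  have hgyc : ContinuousOn (fun s => g (Y ψ s) (ψ (-s))) (Icc 0 h) :=
    hgc.comp (hYc.1.prodMk hψn) (fun s hs => hSsub (hpS s hs))
  have hgyc' : ContinuousOn (fun s => g (Y ψ' s) (ψ' (-s))) (Icc 0 h) :=
    hgc.comp (hYc'.1.prodMk hψ'n) (fun s hs => hSsub (hpS' s hs))
  set A := fun σ => p1 g (Y ψ σ) (ψ (-σ)) with hAdef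
  set A' := fun σ => p1 g (Y ψ' σ) (ψ' (-σ)) with hA'def
  set Cc := fun σ => p2 g (Y ψ σ) (ψ (-σ)) with hCcdef
  set Cc' := fun σ => p2 g (Y ψ' σ) (ψ' (-σ)) with hCc'def
  have hAc : ContinuousOn A (Icc 0 h) :=
    hp1c.comp (hYc.1.prodMk hψn) (fun s hs => hSsub (hpS s hs))
  have hA'c : ContinuousOn A' (Icc 0 h) :=
    hp1c.comp (hYc'.1.prodMk hψ'n) (fun s hs => hSsub (hpS' s hs))
  have hCcc : ContinuousOn Cc (Icc 0 h) :=
    hp2c.comp (hYc.1.prodMk hψn) (fun s hs => hSsub (hpS s hs))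
  have hCc'c : ContinuousOn Cc' (Icc 0 h) :=
    hp2c.comp (hYc'.1.prodMk hψ'n) (fun s hs => hSsub (hpS' s hs))
  have hAb : ∀ s ∈ Icc (0:ℝ) h, |A s| ≤ lam := fun s hs => hlam _ (hpS s hs)
  have hA'b : ∀ s ∈ Icc (0:ℝ) h, |A' s| ≤ lam := fun s hs => hlam _ (hpS' s hs)
  have hCb : ∀ s ∈ Icc (0:ℝ) h, |Cc s| ≤ Lc := fun s hs => hLc _ (hpS s hs)
  have hC'b : ∀ s ∈ Icc (0:ℝ) h, |Cc' s| ≤ Lc := fun s hs => hLc _ (hpS' s hs)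
  -- MVT estimates for the nonlinearity
  have mvt1 : ∀ s ∈ Icc (0:ℝ) h,
      |g (Y ψ' s) (ψ' (-s)) - g (Y ψ s) (ψ' (-s))| ≤ lam * |Y ψ' s - Y ψ s| := by
    intro s hs
    have := (convex_closedBall x₂ b).norm_image_sub_le_of_norm_hasDerivWithin_le
      (f := fun x => g x (ψ' (-s))) (f' := fun x => p1 g x (ψ' (-s)))
      (fun z hz => (hDx (z, ψ' (-s)) (hSsub (Set.mk_mem_prod hz (hu'Kc s hs)))).hasDerivWithinAt)
      (fun z hz => by
        rw [Real.norm_eq_abs]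
        exact hlam (z, ψ' (-s)) (Set.mk_mem_prod hz (hu'Kc s hs)))
      (hYb s hs) (hYb' s hs)
    simpa [Real.norm_eq_abs] using this
  have mvt2 : ∀ s ∈ Icc (0:ℝ) h,
      |g (Y ψ s) (ψ' (-s)) - g (Y ψ s) (ψ (-s))| ≤ Lc * |ψ' (-s) - ψ (-s)| := by
    intro s hs
    have := hKcconv.norm_image_sub_le_of_norm_hasDerivWithin_le
      (f := fun u => g (Y ψ s) u) (f' := fun u => p2 g (Y ψ s) u)
      (fun z hz => (hDy (Y ψ s, z) (hSsub (Set.mk_mem_prod (hYb s hs) hz))).hasDerivWithinAt)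
      (fun z hz => by
        rw [Real.norm_eq_abs]
        exact hLc (Y ψ s, z) (Set.mk_mem_prod (hYb s hs) hz))
      (huKc s hs) (hu'Kc s hs)
    simpa [Real.norm_eq_abs] using this
  -- stability of the solution map
  have hYdc : ContinuousOn (fun t => Y ψ' t - Y ψ t) (Icc 0 h) := hYc'.1.sub hYc.1
  set Mdy := supN 0 h (fun t => Y ψ' t - Y ψ t) with hMdydef
  have hMdy0 : 0 ≤ Mdy := supN_nonneg _ _ _
  have hMdypt : ∀ s ∈ Icc (0:ℝ) h, |Y ψ' s - Y ψ s| ≤ Mdy := fun s hs => abs_le_supN hYdc hs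
  have hstab0 : Mdy ≤ κ * Mdy + h * Lc * dA := by
    apply supN_le' (by positivity)
    intro t ht
    have e1 := hYe' t ht
    have e2 := hYe t ht
    have hint1 : IntervalIntegrable (fun s => g (Y ψ' s) (ψ' (-s))) volume 0 t :=
      intInt hgyc' ht
    have hint2 : IntervalIntegrable (fun s => g (Y ψ s) (ψ (-s))) volume 0 t :=
      intInt hgyc ht
    have e3 : Y ψ' t - Y ψ t
        = -∫ s in (0:ℝ)..t, (g (Y ψ' s) (ψ' (-s)) - g (Y ψ s) (ψ (-s))) := by
      rw [intervalIntegral.integral_sub hint1 hint2]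
      linarith
    rw [e3, abs_neg]
    have hb1 : ∀ s ∈ Set.uIoc (0:ℝ) t,
        ‖g (Y ψ' s) (ψ' (-s)) - g (Y ψ s) (ψ (-s))‖ ≤ lam * Mdy + Lc * dA := by
      intro s hs
      rw [uIoc_of_le ht.1] at hs
      have hs' : s ∈ Icc (0:ℝ) h := ⟨hs.1.le, hs.2.trans ht.2⟩
      rw [Real.norm_eq_abs]
      calc |g (Y ψ' s) (ψ' (-s)) - g (Y ψ s) (ψ (-s))|
          ≤ |g (Y ψ' s) (ψ' (-s)) - g (Y ψ s) (ψ' (-s))|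
            + |g (Y ψ s) (ψ' (-s)) - g (Y ψ s) (ψ (-s))| := by
            have : g (Y ψ' s) (ψ' (-s)) - g (Y ψ s) (ψ (-s))
                = (g (Y ψ' s) (ψ' (-s)) - g (Y ψ s) (ψ' (-s)))
                  + (g (Y ψ s) (ψ' (-s)) - g (Y ψ s) (ψ (-s))) := by ring
            rw [this]; exact abs_add_le _ _
        _ ≤ lam * |Y ψ' s - Y ψ s| + Lc * |ψ' (-s) - ψ (-s)| :=
            add_le_add (mvt1 s hs') (mvt2 s hs')
        _ ≤ lam * Mdy + Lc * dA := by
            apply add_le_add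
            · exact mul_le_mul_of_nonneg_left (hMdypt s hs') hlam0
            · exact mul_le_mul_of_nonneg_left (hΔpt (-s) (hmem s hs')) hLc0
    have := intervalIntegral.norm_integral_le_of_norm_le_const hb1
    rw [Real.norm_eq_abs] at this
    have ht' : |t - 0| ≤ h := by rw [sub_zero, abs_of_nonneg ht.1]; exact ht.2
    calc |∫ s in (0:ℝ)..t, (g (Y ψ' s) (ψ' (-s)) - g (Y ψ s) (ψ (-s)))|
        ≤ (lam * Mdy + Lc * dA) * |t - 0| := this
      _ ≤ (lam * Mdy + Lc * dA) * h := by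
          apply mul_le_mul_of_nonneg_left ht' (by positivity)
      _ = κ * Mdy + h * Lc * dA := by rw [hκdef]; ring
  have hstab : Mdy ≤ Cy0 * dA := by
    rw [hCy0def, div_mul_eq_mul_div, le_div_iff₀ h1κ]
    nlinarith
  have hstabpt : ∀ s ∈ Icc (0:ℝ) h, |Y ψ' s - Y ψ s| ≤ Cy0 * dA :=
    fun s hs => (hMdypt s hs).trans hstab
  -- the distance between corresponding points in S is at most d
  have hdistS : ∀ s ∈ Icc (0:ℝ) h,
      dist (Y ψ' s, ψ' (-s)) (Y ψ s, ψ (-s)) ≤ d := by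
    intro s hs
    rw [Prod.dist_eq]
    apply max_le
    · rw [Real.dist_eq]
      calc |Y ψ' s - Y ψ s| ≤ Cy0 * dA := hstabpt s hs
        _ ≤ (Cy0 + 1) * dA := by nlinarith
        _ ≤ d := hdAd
    · rw [Real.dist_eq]
      exact (hΔpt (-s) (hmem s hs)).trans hdAd'
  have hACd : ∀ s ∈ Icc (0:ℝ) h, |A' s - A s| ≤ η ∧ |Cc' s - Cc s| ≤ η := fun s hs =>
    hUCd _ (hpS' s hs) _ (hpS s hs) (hdistS s hs)
  -- derivative identities for Y ψ and Y ψ'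
  have hYd : ∀ t ∈ Icc (0:ℝ) h,
      HasDerivWithinAt (Y ψ) (-(g (Y ψ t) (ψ (-t)))) (Icc 0 h) t := by
    intro t ht
    have heq : ∀ u ∈ Icc (0:ℝ) h, Y ψ u = x₂ - ∫ s in (0:ℝ)..u, g (Y ψ s) (ψ (-s)) :=
      fun u hu => by linarith [hYe u hu]
    exact ((hasDerivWithinAt_primitive hgyc ht).const_sub x₂).congr heq (heq t ht)
  have hYd' : ∀ t ∈ Icc (0:ℝ) h,
      HasDerivWithinAt (Y ψ') (-(g (Y ψ' t) (ψ' (-t)))) (Icc 0 h) t := by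
    intro t ht
    have heq : ∀ u ∈ Icc (0:ℝ) h, Y ψ' u = x₂ - ∫ s in (0:ℝ)..u, g (Y ψ' s) (ψ' (-s)) :=
      fun u hu => by linarith [hYe' u hu]
    exact ((hasDerivWithinAt_primitive hgyc' ht).const_sub x₂).congr heq (heq t ht)
  have h0mem : (0:ℝ) ∈ Icc (0:ℝ) h := ⟨le_rfl, hh0.le⟩
  have hY0 : Y ψ 0 = x₂ := by have := hYe 0 h0mem; simpa using this
  have hY'0 : Y ψ' 0 = x₂ := by have := hYe' 0 h0mem; simpa using this
  refine ⟨?_, ?_⟩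
  · -- first conjunct : differentiability estimate
    have hXc : ContinuousOn (fun s => ψ' (-s) - ψ (-s)) (Icc 0 h) := hψ'n.sub hψn
    have hfuneq : (Y ψ' - Y ψ - DY g Y ψ (ψ' - ψ))
        = fun t => Y ψ' t - Y ψ t - Dfun A Cc (fun s => ψ' (-s) - ψ (-s)) t := rfl
    rw [hfuneq]
    have hRc : ContinuousOn (fun t => g (Y ψ' t) (ψ' (-t)) - g (Y ψ t) (ψ (-t))
        - A t * (Y ψ' t - Y ψ t) - Cc t * (ψ' (-t) - ψ (-t))) (Icc 0 h) :=
      ((hgyc'.sub hgyc).sub (hAc.mul hYdc)).sub (hCcc.mul hXc)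
    have hFc : ContinuousOn
        (fun t => Y ψ' t - Y ψ t - Dfun A Cc (fun s => ψ' (-s) - ψ (-s)) t) (Icc 0 h) :=
      hYdc.sub (Dfun_cont hAc hCcc hXc)
    have hFd : ∀ t ∈ Icc (0:ℝ) h, HasDerivWithinAt
        (fun t => Y ψ' t - Y ψ t - Dfun A Cc (fun s => ψ' (-s) - ψ (-s)) t)
        (-(A t * (Y ψ' t - Y ψ t - Dfun A Cc (fun s => ψ' (-s) - ψ (-s)) t)
          + (g (Y ψ' t) (ψ' (-t)) - g (Y ψ t) (ψ (-t))
             - A t * (Y ψ' t - Y ψ t) - Cc t * (ψ' (-t) - ψ (-t))))) (Icc 0 h) t := by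
      intro t ht
      have base := ((hYd' t ht).sub (hYd t ht)).sub (Dfun_hasDeriv hAc hCcc hXc ht)
      exact base.congr_deriv (by ring)
    have hρc : ContinuousOn (fun t =>
        -(A t * (Y ψ' t - Y ψ t - Dfun A Cc (fun s => ψ' (-s) - ψ (-s)) t)
          + (g (Y ψ' t) (ψ' (-t)) - g (Y ψ t) (ψ (-t))
             - A t * (Y ψ' t - Y ψ t) - Cc t * (ψ' (-t) - ψ (-t))))) (Icc 0 h) :=
      ((hAc.mul hFc).add hRc).neg
    have hF0 : Y ψ' 0 - Y ψ 0 - Dfun A Cc (fun s => ψ' (-s) - ψ (-s)) 0 = 0 := by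
      have : Dfun A Cc (fun s => ψ' (-s) - ψ (-s)) 0 = 0 := by
        simp [Dfun]
      rw [this, hY0, hY'0]; ring
    -- the Taylor remainder bound
    have hRb : ∀ t ∈ Icc (0:ℝ) h,
        |g (Y ψ' t) (ψ' (-t)) - g (Y ψ t) (ψ (-t))
          - A t * (Y ψ' t - Y ψ t) - Cc t * (ψ' (-t) - ψ (-t))|
        ≤ η * (2 * Cy0 + 1) * dA := by
      intro t ht
      have hyt := hYb t ht
      have hy't := hYb' t ht
      have hut := huKc t ht
      have hu't := hu'Kc t ht
      -- T1 : Taylor in the first variable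
      have hs₁conv : Convex ℝ (Metric.closedBall (Y ψ t) |Y ψ' t - Y ψ t|
          ∩ Metric.closedBall x₂ b) := (convex_closedBall _ _).inter (convex_closedBall _ _)
      have hxmem : Y ψ t ∈ Metric.closedBall (Y ψ t) |Y ψ' t - Y ψ t|
          ∩ Metric.closedBall x₂ b :=
        ⟨Metric.mem_closedBall_self (abs_nonneg _), hyt⟩
      have hymem : Y ψ' t ∈ Metric.closedBall (Y ψ t) |Y ψ' t - Y ψ t|
          ∩ Metric.closedBall x₂ b :=
        ⟨by rw [Metric.mem_closedBall, Real.dist_eq], hy't⟩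
      have hT1 : |g (Y ψ' t) (ψ' (-t)) - g (Y ψ t) (ψ' (-t))
          - p1 g (Y ψ t) (ψ' (-t)) * (Y ψ' t - Y ψ t)| ≤ η * |Y ψ' t - Y ψ t| := by
        apply taylor_bound hs₁conv (f := fun x => g x (ψ' (-t)))
          (f' := fun x => p1 g x (ψ' (-t)))
          (fun z hz => (hDx (z, ψ' (-t))
            (hSsub (Set.mk_mem_prod hz.2 hu't))).hasDerivWithinAt)
          hxmem hymem
        intro z hz
        have hz1 : |z - Y ψ t| ≤ |Y ψ' t - Y ψ t| := by
          have := hz.1; rwa [Metric.mem_closedBall, Real.dist_eq] at this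
        refine (hUCd (z, ψ' (-t)) (Set.mk_mem_prod hz.2 hu't)
          (Y ψ t, ψ' (-t)) (Set.mk_mem_prod hyt hu't) ?_).1
        rw [Prod.dist_eq]
        apply max_le
        · rw [Real.dist_eq]
          calc |z - Y ψ t| ≤ |Y ψ' t - Y ψ t| := hz1
            _ ≤ Cy0 * dA := hstabpt t ht
            _ ≤ (Cy0 + 1) * dA := by nlinarith
            _ ≤ d := hdAd
        · simpa using hd0.le
      -- T2 : difference of the partial derivative
      have hT2 : |p1 g (Y ψ t) (ψ' (-t)) - A t| ≤ η := by
        refine (hUCd (Y ψ t, ψ' (-t)) (Set.mk_mem_prod hyt hu't)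
          (Y ψ t, ψ (-t)) (hpS t ht) ?_).1
        rw [Prod.dist_eq]
        apply max_le
        · simpa using hd0.le
        · rw [Real.dist_eq]
          exact (hΔpt (-t) (hmem t ht)).trans hdAd'
      -- T3 : Taylor in the second variable
      have hs₃conv : Convex ℝ (Metric.closedBall (ψ (-t)) |ψ' (-t) - ψ (-t)| ∩ Kc) :=
        (convex_closedBall _ _).inter hKcconv
      have humem : ψ (-t) ∈ Metric.closedBall (ψ (-t)) |ψ' (-t) - ψ (-t)| ∩ Kc :=
        ⟨Metric.mem_closedBall_self (abs_nonneg _), hut⟩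
      have hu'mem : ψ' (-t) ∈ Metric.closedBall (ψ (-t)) |ψ' (-t) - ψ (-t)| ∩ Kc :=
        ⟨by rw [Metric.mem_closedBall, Real.dist_eq], hu't⟩
      have hT3 : |g (Y ψ t) (ψ' (-t)) - g (Y ψ t) (ψ (-t))
          - Cc t * (ψ' (-t) - ψ (-t))| ≤ η * |ψ' (-t) - ψ (-t)| := by
        apply taylor_bound hs₃conv (f := fun u => g (Y ψ t) u)
          (f' := fun u => p2 g (Y ψ t) u)
          (fun z hz => (hDy (Y ψ t, z)
            (hSsub (Set.mk_mem_prod hyt hz.2))).hasDerivWithinAt)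
          humem hu'mem
        intro z hz
        have hz1 : |z - ψ (-t)| ≤ |ψ' (-t) - ψ (-t)| := by
          have := hz.1; rwa [Metric.mem_closedBall, Real.dist_eq] at this
        refine (hUCd (Y ψ t, z) (Set.mk_mem_prod hyt hz.2)
          (Y ψ t, ψ (-t)) (hpS t ht) ?_).2
        rw [Prod.dist_eq]
        apply max_le
        · simpa using hd0.le
        · rw [Real.dist_eq]
          calc |z - ψ (-t)| ≤ |ψ' (-t) - ψ (-t)| := hz1
            _ ≤ dA := hΔpt (-t) (hmem t ht)
            _ ≤ d := hdAd'
      have hsplit : g (Y ψ' t) (ψ' (-t)) - g (Y ψ t) (ψ (-t))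
          - A t * (Y ψ' t - Y ψ t) - Cc t * (ψ' (-t) - ψ (-t))
          = (g (Y ψ' t) (ψ' (-t)) - g (Y ψ t) (ψ' (-t))
              - p1 g (Y ψ t) (ψ' (-t)) * (Y ψ' t - Y ψ t))
            + (p1 g (Y ψ t) (ψ' (-t)) - A t) * (Y ψ' t - Y ψ t)
            + (g (Y ψ t) (ψ' (-t)) - g (Y ψ t) (ψ (-t))
              - Cc t * (ψ' (-t) - ψ (-t))) := by ring
      rw [hsplit]
      have htri : ∀ x y z : ℝ, |x + y + z| ≤ |x| + |y| + |z| := by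
        intro x y z
        calc |x + y + z| ≤ |x + y| + |z| := abs_add_le _ _
          _ ≤ |x| + |y| + |z| := by linarith [abs_add_le x y]
      have b1 : |g (Y ψ' t) (ψ' (-t)) - g (Y ψ t) (ψ' (-t))
          - p1 g (Y ψ t) (ψ' (-t)) * (Y ψ' t - Y ψ t)| ≤ η * (Cy0 * dA) := by
        refine hT1.trans ?_
        rw [mul_assoc] at *
        exact mul_le_mul_of_nonneg_left (hstabpt t ht) hη0.le
      have b2 : |(p1 g (Y ψ t) (ψ' (-t)) - A t) * (Y ψ' t - Y ψ t)| ≤ η * (Cy0 * dA) := by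
        rw [abs_mul]
        exact mul_le_mul hT2 (hstabpt t ht) (abs_nonneg _) hη0.le
      have b3 : |g (Y ψ t) (ψ' (-t)) - g (Y ψ t) (ψ (-t))
          - Cc t * (ψ' (-t) - ψ (-t))| ≤ η * dA := by
        refine hT3.trans ?_
        exact mul_le_mul_of_nonneg_left (hΔpt (-t) (hmem t ht)) hη0.le
      have hsum : η * (2 * Cy0 + 1) * dA = η * (Cy0 * dA) + η * (Cy0 * dA) + η * dA := by
        ring
      rw [hsum]
      exact (htri _ _ _).trans (add_le_add (add_le_add b1 b2) b3)
    -- Gronwall-type estimate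
    have hMR0 : 0 ≤ η * (2 * Cy0 + 1) * dA := by positivity
    have hMr0 : 0 ≤ supN 0 h (fun t => Y ψ' t - Y ψ t
        - Dfun A Cc (fun s => ψ' (-s) - ψ (-s)) t) := supN_nonneg _ _ _
    have hgron : supN 0 h (fun t => Y ψ' t - Y ψ t
          - Dfun A Cc (fun s => ψ' (-s) - ψ (-s)) t)
        ≤ κ * supN 0 h (fun t => Y ψ' t - Y ψ t
          - Dfun A Cc (fun s => ψ' (-s) - ψ (-s)) t) + h * (η * (2 * Cy0 + 1) * dA) := by
      apply supN_le' (by positivity)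
      intro t ht
      have hFt := integral_derivWithin ht hFc hFd hρc
      rw [hF0, sub_zero] at hFt
      rw [← hFt]
      have hb1 : ∀ s ∈ Set.uIoc (0:ℝ) t, ‖-(A s * (Y ψ' s - Y ψ s
          - Dfun A Cc (fun s => ψ' (-s) - ψ (-s)) s)
          + (g (Y ψ' s) (ψ' (-s)) - g (Y ψ s) (ψ (-s))
            - A s * (Y ψ' s - Y ψ s) - Cc s * (ψ' (-s) - ψ (-s))))‖
          ≤ lam * supN 0 h (fun t => Y ψ' t - Y ψ t
            - Dfun A Cc (fun s => ψ' (-s) - ψ (-s)) t) + η * (2 * Cy0 + 1) * dA := by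
        intro s hs
        rw [uIoc_of_le ht.1] at hs
        have hs' : s ∈ Icc (0:ℝ) h := ⟨hs.1.le, hs.2.trans ht.2⟩
        rw [Real.norm_eq_abs, abs_neg]
        calc |A s * (Y ψ' s - Y ψ s - Dfun A Cc (fun s => ψ' (-s) - ψ (-s)) s)
            + (g (Y ψ' s) (ψ' (-s)) - g (Y ψ s) (ψ (-s))
              - A s * (Y ψ' s - Y ψ s) - Cc s * (ψ' (-s) - ψ (-s)))|
            ≤ |A s| * |Y ψ' s - Y ψ s - Dfun A Cc (fun s => ψ' (-s) - ψ (-s)) s|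
              + |g (Y ψ' s) (ψ' (-s)) - g (Y ψ s) (ψ (-s))
              - A s * (Y ψ' s - Y ψ s) - Cc s * (ψ' (-s) - ψ (-s))| := by
              rw [← abs_mul]; exact abs_add_le _ _
          _ ≤ lam * supN 0 h (fun t => Y ψ' t - Y ψ t
              - Dfun A Cc (fun s => ψ' (-s) - ψ (-s)) t) + η * (2 * Cy0 + 1) * dA := by
              apply add_le_add
              · exact mul_le_mul (hAb s hs') (abs_le_supN hFc hs') (abs_nonneg _) hlam0
              · exact hRb s hs'
      have hnb := intervalIntegral.norm_integral_le_of_norm_le_const hb1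
      rw [Real.norm_eq_abs] at hnb
      have ht' : |t - 0| ≤ h := by rw [sub_zero, abs_of_nonneg ht.1]; exact ht.2
      calc |∫ s in (0:ℝ)..t, -(A s * (Y ψ' s - Y ψ s
            - Dfun A Cc (fun s => ψ' (-s) - ψ (-s)) s)
            + (g (Y ψ' s) (ψ' (-s)) - g (Y ψ s) (ψ (-s))
              - A s * (Y ψ' s - Y ψ s) - Cc s * (ψ' (-s) - ψ (-s))))|
          ≤ (lam * supN 0 h (fun t => Y ψ' t - Y ψ t
            - Dfun A Cc (fun s => ψ' (-s) - ψ (-s)) t) + η * (2 * Cy0 + 1) * dA)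
            * |t - 0| := hnb
        _ ≤ (lam * supN 0 h (fun t => Y ψ' t - Y ψ t
            - Dfun A Cc (fun s => ψ' (-s) - ψ (-s)) t) + η * (2 * Cy0 + 1) * dA) * h := by
            apply mul_le_mul_of_nonneg_left ht' (by positivity)
        _ = κ * supN 0 h (fun t => Y ψ' t - Y ψ t
            - Dfun A Cc (fun s => ψ' (-s) - ψ (-s)) t) + h * (η * (2 * Cy0 + 1) * dA) := by
            rw [hκdef]; ring
    have hMrB : supN 0 h (fun t => Y ψ' t - Y ψ t
        - Dfun A Cc (fun s => ψ' (-s) - ψ (-s)) t)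
        ≤ h * (η * (2 * Cy0 + 1) * dA) / (1 - κ) := by
      rw [le_div_iff₀ h1κ]
      nlinarith
    have hndB : supN 0 h (derivWithin (fun t => Y ψ' t - Y ψ t
        - Dfun A Cc (fun s => ψ' (-s) - ψ (-s)) t) (Icc 0 h))
        ≤ lam * supN 0 h (fun t => Y ψ' t - Y ψ t
          - Dfun A Cc (fun s => ψ' (-s) - ψ (-s)) t) + η * (2 * Cy0 + 1) * dA := by
      apply supN_le' (by positivity)
      intro t ht
      rw [(hFd t ht).derivWithin ((uniqueDiffOn_Icc hh0) t ht)]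
      rw [abs_neg]
      calc |A t * (Y ψ' t - Y ψ t - Dfun A Cc (fun s => ψ' (-s) - ψ (-s)) t)
          + (g (Y ψ' t) (ψ' (-t)) - g (Y ψ t) (ψ (-t))
            - A t * (Y ψ' t - Y ψ t) - Cc t * (ψ' (-t) - ψ (-t)))|
          ≤ |A t| * |Y ψ' t - Y ψ t - Dfun A Cc (fun s => ψ' (-s) - ψ (-s)) t|
            + |g (Y ψ' t) (ψ' (-t)) - g (Y ψ t) (ψ (-t))
            - A t * (Y ψ' t - Y ψ t) - Cc t * (ψ' (-t) - ψ (-t))| := by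
            rw [← abs_mul]; exact abs_add_le _ _
        _ ≤ lam * supN 0 h (fun t => Y ψ' t - Y ψ t
            - Dfun A Cc (fun s => ψ' (-s) - ψ (-s)) t) + η * (2 * Cy0 + 1) * dA :=
            add_le_add (mul_le_mul (hAb t ht) (abs_le_supN hFc ht) (abs_nonneg _) hlam0)
              (hRb t ht)
    have hce : C₁ * η ≤ ε' := by
      rw [hηdef]
      calc C₁ * (ε' / Ctot) ≤ Ctot * (ε' / Ctot) := by
            apply mul_le_mul_of_nonneg_right _ (by positivity)
            rw [hCtotdef]; linarith
        _ = ε' := by field_simp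
    calc nC1 0 h (fun t => Y ψ' t - Y ψ t - Dfun A Cc (fun s => ψ' (-s) - ψ (-s)) t)
        ≤ supN 0 h (fun t => Y ψ' t - Y ψ t - Dfun A Cc (fun s => ψ' (-s) - ψ (-s)) t)
          + (lam * supN 0 h (fun t => Y ψ' t - Y ψ t
            - Dfun A Cc (fun s => ψ' (-s) - ψ (-s)) t) + η * (2 * Cy0 + 1) * dA) :=
          add_le_add le_rfl hndB
      _ = (1 + lam) * supN 0 h (fun t => Y ψ' t - Y ψ t
            - Dfun A Cc (fun s => ψ' (-s) - ψ (-s)) t) + η * (2 * Cy0 + 1) * dA := by ring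
      _ ≤ (1 + lam) * (h * (η * (2 * Cy0 + 1) * dA) / (1 - κ)) + η * (2 * Cy0 + 1) * dA := by
          apply add_le_add _ le_rfl
          exact mul_le_mul_of_nonneg_left hMrB (by positivity)
      _ = C₁ * η * dA := by
          rw [hC₁def]
          field_simp
      _ ≤ ε' * dA := mul_le_mul_of_nonneg_right hce hdA0
      _ ≤ ε' * nC1 (-h) 0 (ψ' - ψ) :=
          mul_le_mul_of_nonneg_left (supN_le_nC1 _ _ _) hε'.le
  · -- second conjunct : continuity of the derivative
    intro χ hχ
    have hXc : ContinuousOn (fun s => χ (-s)) (Icc 0 h) :=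
      hχ.1.comp continuous_neg.continuousOn hmem
    have hMχ0 : 0 ≤ supN (-h) 0 χ := supN_nonneg _ _ _
    have hXb : ∀ s ∈ Icc (0:ℝ) h, |χ (-s)| ≤ supN (-h) 0 χ :=
      fun s hs => abs_le_supN hχ.1 (hmem s hs)
    have hfuneq2 : (DY g Y ψ' χ - DY g Y ψ χ)
        = fun t => Dfun A' Cc' (fun s => χ (-s)) t - Dfun A Cc (fun s => χ (-s)) t := rfl
    rw [hfuneq2]
    -- bounds on B, exp(-B), V
    have hB1 : ∀ t ∈ Icc (0:ℝ) h, |Bfun A t| ≤ 1 := by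
      intro t ht
      calc |Bfun A t| ≤ lam * t := Bfun_bound hAc hAb ht
        _ ≤ lam * h := mul_le_mul_of_nonneg_left ht.2 hlam0
        _ ≤ 1 := by rw [← hκdef]; linarith
    have hB1' : ∀ t ∈ Icc (0:ℝ) h, |Bfun A' t| ≤ 1 := by
      intro t ht
      calc |Bfun A' t| ≤ lam * t := Bfun_bound hA'c hA'b ht
        _ ≤ lam * h := mul_le_mul_of_nonneg_left ht.2 hlam0
        _ ≤ 1 := by rw [← hκdef]; linarith
    have hBd : ∀ t ∈ Icc (0:ℝ) h, |Bfun A' t - Bfun A t| ≤ η * h := by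
      intro t ht
      have e1 : Bfun A' t - Bfun A t = ∫ s in (0:ℝ)..t, (A' s - A s) := by
        rw [Bfun, Bfun, ← intervalIntegral.integral_sub (intInt hA'c ht) (intInt hAc ht)]
      rw [e1]
      have hb1 : ∀ s ∈ Set.uIoc (0:ℝ) t, ‖A' s - A s‖ ≤ η := by
        intro s hs
        rw [uIoc_of_le ht.1] at hs
        rw [Real.norm_eq_abs]
        exact (hACd s ⟨hs.1.le, hs.2.trans ht.2⟩).1
      have := intervalIntegral.norm_integral_le_of_norm_le_const hb1
      rw [Real.norm_eq_abs] at this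
      calc |∫ s in (0:ℝ)..t, (A' s - A s)| ≤ η * |t - 0| := this
        _ ≤ η * h := by
            apply mul_le_mul_of_nonneg_left _ hη0.le
            rw [sub_zero, abs_of_nonneg ht.1]; exact ht.2
    have hEb : ∀ t ∈ Icc (0:ℝ) h, Real.exp (-(Bfun A t)) ≤ E1 :=
      fun t ht => Real.exp_le_exp.2 ((neg_le_abs _).trans (hB1 t ht))
    have hEb' : ∀ t ∈ Icc (0:ℝ) h, Real.exp (-(Bfun A' t)) ≤ E1 :=
      fun t ht => Real.exp_le_exp.2 ((neg_le_abs _).trans (hB1' t ht))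
    have hEbp : ∀ t ∈ Icc (0:ℝ) h, Real.exp (Bfun A t) ≤ E1 :=
      fun t ht => Real.exp_le_exp.2 ((le_abs_self _).trans (hB1 t ht))
    have hEbp' : ∀ t ∈ Icc (0:ℝ) h, Real.exp (Bfun A' t) ≤ E1 :=
      fun t ht => Real.exp_le_exp.2 ((le_abs_self _).trans (hB1' t ht))
    have hEd : ∀ t ∈ Icc (0:ℝ) h,
        |Real.exp (-(Bfun A' t)) - Real.exp (-(Bfun A t))| ≤ E1 * (η * h) := by
      intro t ht
      have := exp_lip (x := -(Bfun A' t)) (y := -(Bfun A t))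
        (by rw [abs_neg]; exact hB1' t ht) (by rw [abs_neg]; exact hB1 t ht)
      refine this.trans ?_
      apply mul_le_mul_of_nonneg_left _ hE10.le
      have : -(Bfun A' t) - -(Bfun A t) = -(Bfun A' t - Bfun A t) := by ring
      rw [this, abs_neg]
      exact hBd t ht
    have hVb : ∀ t ∈ Icc (0:ℝ) h,
        |Vfun A Cc (fun s => χ (-s)) t| ≤ E1 * (Lc * supN (-h) 0 χ) * h := by
      intro t ht
      have hb1 : ∀ s ∈ Set.uIoc (0:ℝ) t,
          ‖Real.exp (Bfun A s) * (Cc s * χ (-s))‖ ≤ E1 * (Lc * supN (-h) 0 χ) := by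
        intro s hs
        rw [uIoc_of_le ht.1] at hs
        have hs' : s ∈ Icc (0:ℝ) h := ⟨hs.1.le, hs.2.trans ht.2⟩
        rw [Real.norm_eq_abs, abs_mul, abs_mul, abs_of_pos (Real.exp_pos _)]
        apply mul_le_mul (hEbp s hs') _ (by positivity) hE10.le
        exact mul_le_mul (hCb s hs') (hXb s hs') (abs_nonneg _) hLc0
      have := intervalIntegral.norm_integral_le_of_norm_le_const hb1
      rw [Real.norm_eq_abs] at this
      refine this.trans ?_
      apply mul_le_mul_of_nonneg_left _ (by positivity)
      rw [sub_zero, abs_of_nonneg ht.1]; exact ht.2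
    have hVb' : ∀ t ∈ Icc (0:ℝ) h,
        |Vfun A' Cc' (fun s => χ (-s)) t| ≤ E1 * (Lc * supN (-h) 0 χ) * h := by
      intro t ht
      have hb1 : ∀ s ∈ Set.uIoc (0:ℝ) t,
          ‖Real.exp (Bfun A' s) * (Cc' s * χ (-s))‖ ≤ E1 * (Lc * supN (-h) 0 χ) := by
        intro s hs
        rw [uIoc_of_le ht.1] at hs
        have hs' : s ∈ Icc (0:ℝ) h := ⟨hs.1.le, hs.2.trans ht.2⟩
        rw [Real.norm_eq_abs, abs_mul, abs_mul, abs_of_pos (Real.exp_pos _)]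
        apply mul_le_mul (hEbp' s hs') _ (by positivity) hE10.le
        exact mul_le_mul (hC'b s hs') (hXb s hs') (abs_nonneg _) hLc0
      have := intervalIntegral.norm_integral_le_of_norm_le_const hb1
      rw [Real.norm_eq_abs] at this
      refine this.trans ?_
      apply mul_le_mul_of_nonneg_left _ (by positivity)
      rw [sub_zero, abs_of_nonneg ht.1]; exact ht.2
    have hVd : ∀ t ∈ Icc (0:ℝ) h,
        |Vfun A' Cc' (fun s => χ (-s)) t - Vfun A Cc (fun s => χ (-s)) t|
        ≤ (E1 * (η * h) * (Lc * supN (-h) 0 χ) + E1 * (η * supN (-h) 0 χ)) * h := by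
      intro t ht
      have e1 : Vfun A' Cc' (fun s => χ (-s)) t - Vfun A Cc (fun s => χ (-s)) t
          = ∫ s in (0:ℝ)..t, (Real.exp (Bfun A' s) * (Cc' s * χ (-s))
              - Real.exp (Bfun A s) * (Cc s * χ (-s))) := by
        rw [Vfun, Vfun, ← intervalIntegral.integral_sub
          (intInt (Vint_cont hA'c hCc'c hXc) ht) (intInt (Vint_cont hAc hCcc hXc) ht)]
      rw [e1]
      have hb1 : ∀ s ∈ Set.uIoc (0:ℝ) t,
          ‖Real.exp (Bfun A' s) * (Cc' s * χ (-s)) - Real.exp (Bfun A s) * (Cc s * χ (-s))‖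
          ≤ E1 * (η * h) * (Lc * supN (-h) 0 χ) + E1 * (η * supN (-h) 0 χ) := by
        intro s hs
        rw [uIoc_of_le ht.1] at hs
        have hs' : s ∈ Icc (0:ℝ) h := ⟨hs.1.le, hs.2.trans ht.2⟩
        rw [Real.norm_eq_abs]
        have esplit : Real.exp (Bfun A' s) * (Cc' s * χ (-s))
            - Real.exp (Bfun A s) * (Cc s * χ (-s))
            = (Real.exp (Bfun A' s) - Real.exp (Bfun A s)) * (Cc' s * χ (-s))
              + Real.exp (Bfun A s) * ((Cc' s - Cc s) * χ (-s)) := by ring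
        rw [esplit]
        refine (abs_add_le _ _).trans ?_
        apply add_le_add
        · rw [abs_mul]
          have h1 : |Real.exp (Bfun A' s) - Real.exp (Bfun A s)| ≤ E1 * (η * h) := by
            refine (exp_lip (hB1' s hs') (hB1 s hs')).trans ?_
            exact mul_le_mul_of_nonneg_left (hBd s hs') hE10.le
          apply mul_le_mul h1 _ (abs_nonneg _) (by positivity)
          rw [abs_mul]
          exact mul_le_mul (hC'b s hs') (hXb s hs') (abs_nonneg _) hLc0
        · rw [abs_mul, abs_mul, abs_of_pos (Real.exp_pos _)]
          apply mul_le_mul (hEbp s hs') _ (by positivity) hE10.le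
          exact mul_le_mul (hACd s hs').2 (hXb s hs') (abs_nonneg _) hη0.le
      have := intervalIntegral.norm_integral_le_of_norm_le_const hb1
      rw [Real.norm_eq_abs] at this
      refine this.trans ?_
      apply mul_le_mul_of_nonneg_left _ (by positivity)
      rw [sub_zero, abs_of_nonneg ht.1]; exact ht.2
    -- pointwise bound on the difference and on its derivative
    have hDb : ∀ t ∈ Icc (0:ℝ) h,
        |Dfun A Cc (fun s => χ (-s)) t| ≤ E1 * (E1 * (Lc * supN (-h) 0 χ) * h) := by
      intro t ht
      rw [Dfun_eq hAc ht, abs_neg, abs_mul, abs_of_pos (Real.exp_pos _)]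
      exact mul_le_mul (hEb t ht) (hVb t ht) (abs_nonneg _) hE10.le
    have hGpt : ∀ t ∈ Icc (0:ℝ) h,
        |Dfun A' Cc' (fun s => χ (-s)) t - Dfun A Cc (fun s => χ (-s)) t|
        ≤ C₂ * η * supN (-h) 0 χ := by
      intro t ht
      rw [Dfun_eq hA'c ht, Dfun_eq hAc ht]
      have esplit : -(Real.exp (-(Bfun A' t)) * Vfun A' Cc' (fun s => χ (-s)) t)
          - -(Real.exp (-(Bfun A t)) * Vfun A Cc (fun s => χ (-s)) t)
          = -((Real.exp (-(Bfun A' t)) - Real.exp (-(Bfun A t)))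
              * Vfun A' Cc' (fun s => χ (-s)) t
            + Real.exp (-(Bfun A t))
              * (Vfun A' Cc' (fun s => χ (-s)) t - Vfun A Cc (fun s => χ (-s)) t)) := by
        ring
      rw [esplit, abs_neg]
      refine (abs_add_le _ _).trans ?_
      have b1 : |(Real.exp (-(Bfun A' t)) - Real.exp (-(Bfun A t)))
          * Vfun A' Cc' (fun s => χ (-s)) t|
          ≤ (E1 * (η * h)) * (E1 * (Lc * supN (-h) 0 χ) * h) := by
        rw [abs_mul]
        exact mul_le_mul (hEd t ht) (hVb' t ht) (abs_nonneg _) (by positivity)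
      have b2 : |Real.exp (-(Bfun A t))
          * (Vfun A' Cc' (fun s => χ (-s)) t - Vfun A Cc (fun s => χ (-s)) t)|
          ≤ E1 * ((E1 * (η * h) * (Lc * supN (-h) 0 χ) + E1 * (η * supN (-h) 0 χ)) * h) := by
        rw [abs_mul, abs_of_pos (Real.exp_pos _)]
        exact mul_le_mul (hEb t ht) (hVd t ht) (abs_nonneg _) hE10.le
      refine (add_le_add b1 b2).trans ?_
      have : (E1 * (η * h)) * (E1 * (Lc * supN (-h) 0 χ) * h)
          + E1 * ((E1 * (η * h) * (Lc * supN (-h) 0 χ) + E1 * (η * supN (-h) 0 χ)) * h)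
          = C₂ * η * supN (-h) 0 χ := by
        rw [hC₂def]; ring
      rw [this]
    have hGd : ∀ t ∈ Icc (0:ℝ) h, HasDerivWithinAt
        (fun t => Dfun A' Cc' (fun s => χ (-s)) t - Dfun A Cc (fun s => χ (-s)) t)
        (-(A' t * Dfun A' Cc' (fun s => χ (-s)) t + Cc' t * χ (-t))
          - -(A t * Dfun A Cc (fun s => χ (-s)) t + Cc t * χ (-t))) (Icc 0 h) t :=
      fun t ht => (Dfun_hasDeriv hA'c hCc'c hXc ht).sub (Dfun_hasDeriv hAc hCcc hXc ht)
    have hρ₂b : ∀ t ∈ Icc (0:ℝ) h,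
        |(-(A' t * Dfun A' Cc' (fun s => χ (-s)) t + Cc' t * χ (-t))
          - -(A t * Dfun A Cc (fun s => χ (-s)) t + Cc t * χ (-t)))|
        ≤ C₃ * η * supN (-h) 0 χ := by
      intro t ht
      have esplit : -(A' t * Dfun A' Cc' (fun s => χ (-s)) t + Cc' t * χ (-t))
          - -(A t * Dfun A Cc (fun s => χ (-s)) t + Cc t * χ (-t))
          = -(A' t * (Dfun A' Cc' (fun s => χ (-s)) t - Dfun A Cc (fun s => χ (-s)) t)
            + (A' t - A t) * Dfun A Cc (fun s => χ (-s)) t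
            + (Cc' t - Cc t) * χ (-t)) := by ring
      rw [esplit, abs_neg]
      have htri : ∀ x y z : ℝ, |x + y + z| ≤ |x| + |y| + |z| := by
        intro x y z
        calc |x + y + z| ≤ |x + y| + |z| := abs_add_le _ _
          _ ≤ |x| + |y| + |z| := by linarith [abs_add_le x y]
      refine (htri _ _ _).trans ?_
      have b1 : |A' t * (Dfun A' Cc' (fun s => χ (-s)) t - Dfun A Cc (fun s => χ (-s)) t)|
          ≤ lam * (C₂ * η * supN (-h) 0 χ) := by
        rw [abs_mul]
        exact mul_le_mul (hA'b t ht) (hGpt t ht) (abs_nonneg _) hlam0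
      have b2 : |(A' t - A t) * Dfun A Cc (fun s => χ (-s)) t|
          ≤ η * (E1 * (E1 * (Lc * supN (-h) 0 χ) * h)) := by
        rw [abs_mul]
        exact mul_le_mul (hACd t ht).1 (hDb t ht) (abs_nonneg _) hη0.le
      have b3 : |(Cc' t - Cc t) * χ (-t)| ≤ η * supN (-h) 0 χ := by
        rw [abs_mul]
        exact mul_le_mul (hACd t ht).2 (hXb t ht) (abs_nonneg _) hη0.le
      refine ((add_le_add (add_le_add b1 b2) b3)).trans ?_
      have : lam * (C₂ * η * supN (-h) 0 χ) + η * (E1 * (E1 * (Lc * supN (-h) 0 χ) * h))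
          + η * supN (-h) 0 χ = C₃ * η * supN (-h) 0 χ := by
        rw [hC₃def]; ring
      rw [this]
    have hce2 : (C₂ + C₃) * η ≤ ε' := by
      rw [hηdef]
      calc (C₂ + C₃) * (ε' / Ctot) ≤ Ctot * (ε' / Ctot) := by
            apply mul_le_mul_of_nonneg_right _ (by positivity)
            rw [hCtotdef]; linarith
        _ = ε' := by field_simp
    calc nC1 0 h (fun t => Dfun A' Cc' (fun s => χ (-s)) t - Dfun A Cc (fun s => χ (-s)) t)
        ≤ C₂ * η * supN (-h) 0 χ + C₃ * η * supN (-h) 0 χ := by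
          apply add_le_add
          · exact supN_le' (by positivity) hGpt
          · apply supN_le' (by positivity)
            intro t ht
            rw [(hGd t ht).derivWithin ((uniqueDiffOn_Icc hh0) t ht)]
            exact hρ₂b t ht
      _ = (C₂ + C₃) * η * supN (-h) 0 χ := by ring
      _ ≤ ε' * supN (-h) 0 χ := mul_le_mul_of_nonneg_right hce2 hMχ0
      _ ≤ ε' * nC1 (-h) 0 χ := mul_le_mul_of_nonneg_left (supN_le_nC1 _ _ _) hε'.le

end Stmt19Aux

/-- under hypothesis (G) with h = b/K, the solution map ψ ↦ y(·,ψ) of the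
integral equation y(t) + ∫₀ᵗ g(y(s),ψ(-s)) ds = x₂ is continuously Fréchet differentiable
from M = C¹([-h,0],I) into C¹([0,h],ℝ), with derivative Dy(ψ) given by the stated formula. -/
theorem stmt19 (I J : Set ℝ) (hIo : IsOpen I) (hIne : I.Nonempty)
    (hJo : IsOpen J) (hJc : J.OrdConnected)
    (x₁ x₂ b K ε : ℝ) (hb : 0 < b) (hK : 0 < K) (hε : 0 < ε)
    (g : ℝ → ℝ → ℝ)
    (hsub : Metric.closedBall x₂ b ⊆ J)
    (hg : ContDiffOn ℝ 1 (fun p : ℝ × ℝ => g p.1 p.2) (J ×ˢ I))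
    (hg2 : ∀ x ∈ Metric.closedBall x₂ b, ∀ y ∈ I, |p1 g x y| < K / b)
    (hg3 : ∀ x ∈ Metric.closedBall x₂ b, ∀ y ∈ I, ε ≤ g x y ∧ g x y ≤ K)
    (hx : x₂ - x₁ ∈ Set.Ioo 0 ((b / K) * ε))
    (Y : (ℝ → ℝ) → ℝ → ℝ)
    (hY : ∀ ψ : ℝ → ℝ, C1on (-(b/K)) 0 ψ → (∀ t ∈ Set.Icc (-(b/K)) 0, ψ t ∈ I) →
      C1on 0 (b/K) (Y ψ) ∧ (∀ s ∈ Set.Icc (0:ℝ) (b/K), Y ψ s ∈ Metric.closedBall x₂ b) ∧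
      (∀ t ∈ Set.Icc (0:ℝ) (b/K),
        Y ψ t + ∫ s in (0:ℝ)..t, g (Y ψ s) (ψ (-s)) = x₂)) :
    (∀ ψ : ℝ → ℝ, C1on (-(b/K)) 0 ψ → (∀ t ∈ Set.Icc (-(b/K)) 0, ψ t ∈ I) →
      ∀ ε' > 0, ∃ δ > 0, ∀ ψ' : ℝ → ℝ,
        C1on (-(b/K)) 0 ψ' → (∀ t ∈ Set.Icc (-(b/K)) 0, ψ' t ∈ I) →
        nC1 (-(b/K)) 0 (ψ' - ψ) ≤ δ →
        nC1 0 (b/K) (Y ψ' - Y ψ - DY g Y ψ (ψ' - ψ)) ≤ ε' * nC1 (-(b/K)) 0 (ψ' - ψ)) ∧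
    (∀ ψ : ℝ → ℝ, C1on (-(b/K)) 0 ψ → (∀ t ∈ Set.Icc (-(b/K)) 0, ψ t ∈ I) →
      ∀ ε' > 0, ∃ δ > 0, ∀ ψ' : ℝ → ℝ,
        C1on (-(b/K)) 0 ψ' → (∀ t ∈ Set.Icc (-(b/K)) 0, ψ' t ∈ I) →
        nC1 (-(b/K)) 0 (ψ' - ψ) ≤ δ →
        ∀ χ : ℝ → ℝ, C1on (-(b/K)) 0 χ →
          nC1 0 (b/K) (DY g Y ψ' χ - DY g Y ψ χ) ≤ ε' * nC1 (-(b/K)) 0 χ) := by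
  
  constructor
  · intro ψ hψ1 hψ2 ε' hε'
    obtain ⟨δ, hδ, hmain⟩ := Stmt19Aux.main I J hIo hJo x₂ b K hb hK g hsub hg hg2 Y hY
      ψ hψ1 hψ2 ε' hε'
    exact ⟨δ, hδ, fun ψ' h1 h2 h3 => (hmain ψ' h1 h2 h3).1⟩
  · intro ψ hψ1 hψ2 ε' hε'
    obtain ⟨δ, hδ, hmain⟩ := Stmt19Aux.main I J hIo hJo x₂ b K hb hK g hsub hg hg2 Y hY
      ψ hψ1 hψ2 ε' hε'
    exact ⟨δ, hδ, fun ψ' h1 h2 h3 χ hχ => (hmain ψ' h1 h2 h3).2 χ hχ⟩
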